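/- Let φ ∈ L¹(ℝ^d) ∩ L^α(ℝ^d) with α ∈ (1,2] and d < β < αd, and let μ(dx) = φ(x)dx. Then there exists a constant C_μ > 0 such that ∫_{ℝ^d} |μ(B(x,r))|^α dx ≤ C_μ (r^d ∧ r^{αd}) for all r > 0; in particular μ ∈ M_{α,β}. -/

import Mathlib

open MeasureTheory ENNReal

lemma fubini_ball (d : ℕ) (r : ℝ) (h : EuclideanSpace ℝ (Fin d) → ℝ≥0∞) (hh : Measurable h) :
    ∫⁻ x : EuclideanSpace ℝ (Fin d), ∫⁻ y in Metric.closedBall x r, h y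
      = volume (Metric.closedBall (0 : EuclideanSpace ℝ (Fin d)) r) * ∫⁻ y, h y := by
  have hk : Measurable (fun p : (EuclideanSpace ℝ (Fin d)) × (EuclideanSpace ℝ (Fin d)) =>
      if dist p.1 p.2 ≤ r then h p.2 else 0) := by
    refine Measurable.ite ?_ (hh.comp measurable_snd) measurable_const
    exact measurableSet_le (continuous_dist.measurable) measurable_const
  calc ∫⁻ x : EuclideanSpace ℝ (Fin d), ∫⁻ y in Metric.closedBall x r, h y
      = ∫⁻ x : EuclideanSpace ℝ (Fin d), ∫⁻ y, (if dist x y ≤ r then h y else 0) := by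
        refine lintegral_congr fun x => ?_
        rw [← lintegral_indicator measurableSet_closedBall h]
        refine lintegral_congr fun y => ?_
        classical
        rw [Set.indicator_apply]
        congr 1
        simp [Metric.mem_closedBall, dist_comm, eq_iff_iff]
    _ = ∫⁻ y, ∫⁻ x, (if dist x y ≤ r then h y else 0) :=
        lintegral_lintegral_swap hk.aemeasurable
    _ = ∫⁻ y, h y * volume (Metric.closedBall y r) := by
        refine lintegral_congr fun y => ?_
        have : ∀ x : EuclideanSpace ℝ (Fin d), (if dist x y ≤ r then h y else 0)
            = (Metric.closedBall y r).indicator (fun _ => h y) x := by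
          intro x
          classical
          rw [Set.indicator_apply]
          simp only [Metric.mem_closedBall]
        simp_rw [this]
        rw [lintegral_indicator measurableSet_closedBall, setLIntegral_const]
    _ = volume (Metric.closedBall (0 : EuclideanSpace ℝ (Fin d)) r) * ∫⁻ y, h y := by
        simp_rw [fun y : EuclideanSpace ℝ (Fin d) =>
          Measure.addHaar_closedBall_center volume y r]
        rw [lintegral_mul_const _ hh, mul_comm]

theorem L1_Lalpha_in_Mab (d : ℕ) (hd : 1 ≤ d) (α β : ℝ)
    (hα : 1 < α) (hα2 : α ≤ 2) (hβ1 : (d : ℝ) < β) (hβ2 : β < α * d)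
    (φ : EuclideanSpace ℝ (Fin d) → ℝ)
    (hφ1 : Integrable φ)
    (hφα : MemLp φ (ENNReal.ofReal α)) :
    ∃ C > (0 : ℝ), ∀ r > (0 : ℝ),
      ∫ x : EuclideanSpace ℝ (Fin d), |∫ y in Metric.closedBall x r, φ y| ^ α
        ≤ C * min (r ^ (d : ℝ)) (r ^ (α * d)) := by
  have hα0 : (0:ℝ) < α := by linarith
  set φ' : EuclideanSpace ℝ (Fin d) → ℝ := hφ1.1.mk φ with hφ'def
  have hφ'm : StronglyMeasurable φ' := hφ1.1.stronglyMeasurable_mk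
  have hae : φ =ᵐ[volume] φ' := hφ1.1.ae_eq_mk
  set g : EuclideanSpace ℝ (Fin d) → ℝ≥0∞ := fun y => (‖φ' y‖₊ : ℝ≥0∞) with hgdef
  have hg : Measurable g := hφ'm.measurable.nnnorm.coe_nnreal_ennreal
  set I1 : ℝ≥0∞ := ∫⁻ y, g y with hI1def
  have hI1 : I1 ≠ ⊤ := by
    have h1 : ∫⁻ y, (‖φ y‖₊ : ℝ≥0∞) < ⊤ := hφ1.2
    have h2 : ∫⁻ y, g y = ∫⁻ y, (‖φ y‖₊ : ℝ≥0∞) :=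
      lintegral_congr_ae (hae.mono fun y hy => by rw [hgdef]; simp [hy])
    rw [hI1def, h2]; exact h1.ne
  set Iα : ℝ≥0∞ := ∫⁻ y, g y ^ α with hIαdef
  have hIα : Iα ≠ ⊤ := by
    have hp0 : (ENNReal.ofReal α) ≠ 0 := by simp [ENNReal.ofReal_eq_zero]; linarith
    have hsn := hφα.2
    rw [eLpNorm_eq_lintegral_rpow_enorm_toReal hp0 ENNReal.ofReal_ne_top] at hsn
    have htα : (ENNReal.ofReal α).toReal = α := ENNReal.toReal_ofReal hα0.le
    rw [htα] at hsn
    have h3 : ∫⁻ y, (‖φ y‖₊ : ℝ≥0∞) ^ α < ⊤ := by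
      have := ENNReal.rpow_lt_top_of_nonneg hα0.le hsn.ne
      rwa [← ENNReal.rpow_mul, one_div, inv_mul_cancel₀ hα0.ne', ENNReal.rpow_one] at this
    have h2 : ∫⁻ y, g y ^ α = ∫⁻ y, (‖φ y‖₊ : ℝ≥0∞) ^ α :=
      lintegral_congr_ae (hae.mono fun y hy => by rw [hgdef]; simp [hy])
    rw [hIαdef, h2]; exact h3.ne
  set c : ℝ≥0∞ := volume (Metric.ball (0:EuclideanSpace ℝ (Fin d)) 1) with hcdef
  set C : ℝ := (I1 ^ α * c).toReal + (c ^ α * Iα).toReal + 1 with hCdef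
  have hC : 0 < C := by positivity
  refine ⟨C, hC, fun r hr => ?_⟩
  set V : ℝ≥0∞ := volume (Metric.closedBall (0:EuclideanSpace ℝ (Fin d)) r) with hVdef
  have hVt : V ≠ ⊤ := measure_closedBall_lt_top.ne
  set G : EuclideanSpace ℝ (Fin d) → ℝ≥0∞ :=
    fun x => ∫⁻ y in Metric.closedBall x r, g y with hGdef
  have hpt : ∀ x, ENNReal.ofReal (|∫ y in Metric.closedBall x r, φ y| ^ α) ≤ G x ^ α := by
    intro x
    have hFx : ∫ y in Metric.closedBall x r, φ y = ∫ y in Metric.closedBall x r, φ' y :=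
      integral_congr_ae (ae_restrict_of_ae hae)
    rw [← ENNReal.ofReal_rpow_of_nonneg (abs_nonneg _) hα0.le]
    refine ENNReal.rpow_le_rpow ?_ hα0.le
    rw [hFx, ← Real.norm_eq_abs, ofReal_norm]
    exact enorm_integral_le_lintegral_enorm _
  have hL : ∫⁻ x, ENNReal.ofReal (|∫ y in Metric.closedBall x r, φ y| ^ α) ≤ ∫⁻ x, G x ^ α :=
    lintegral_mono hpt
  have hfub1 : ∫⁻ x, G x = V * I1 := fubini_ball d r g hg
  have hgα : Measurable fun y => g y ^ α := hg.pow_const α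
  have hfub2 : ∫⁻ x, ∫⁻ y in Metric.closedBall x r, g y ^ α = V * Iα :=
    fubini_ball d r _ hgα
  have hVeq : V = ENNReal.ofReal (r ^ (d:ℝ)) * c := by
    rw [hVdef, hcdef, Measure.addHaar_closedBall volume _ hr.le]
    congr 2
    rw [finrank_euclideanSpace_fin, Real.rpow_natCast]
  -- bound B (large r)
  have hBpt : ∀ x, G x ^ α ≤ I1 ^ (α - 1) * G x := by
    intro x
    have h1 : G x ≤ I1 := setLIntegral_le_lintegral _ _
    calc G x ^ α = G x ^ ((α - 1) + 1) := by norm_num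
      _ = G x ^ (α - 1) * G x := by
          rw [ENNReal.rpow_add_of_nonneg _ _ (by linarith) zero_le_one, ENNReal.rpow_one]
      _ ≤ I1 ^ (α - 1) * G x :=
          mul_le_mul_left (ENNReal.rpow_le_rpow h1 (by linarith)) _
  have hB : ∫⁻ x, G x ^ α ≤ (I1 ^ α * c) * ENNReal.ofReal (r ^ (d:ℝ)) := by
    calc ∫⁻ x, G x ^ α ≤ ∫⁻ x, I1 ^ (α - 1) * G x := lintegral_mono hBpt
      _ = I1 ^ (α - 1) * ∫⁻ x, G x :=
          lintegral_const_mul' _ _ (ENNReal.rpow_ne_top_of_nonneg (by linarith) hI1)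
      _ = I1 ^ (α - 1) * (V * I1) := by rw [hfub1]
      _ = (I1 ^ (α - 1) * I1) * V := by ring
      _ = I1 ^ α * V := by
          have h5 : I1 ^ (α - 1) * I1 = I1 ^ α := by
            nth_rewrite 2 [← ENNReal.rpow_one I1]
            rw [← ENNReal.rpow_add_of_nonneg _ _ (by linarith) zero_le_one]
            norm_num
          rw [h5]
      _ = (I1 ^ α * c) * ENNReal.ofReal (r ^ (d:ℝ)) := by rw [hVeq]; ring
  -- bound A (small r) via Hölder
  have hApt : ∀ x, G x ^ α ≤ V ^ (α - 1) * ∫⁻ y in Metric.closedBall x r, g y ^ α := by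
    intro x
    set q : ℝ := Real.conjExponent α with hqdef
    have hpq : α.HolderConjugate q := Real.HolderConjugate.conjExponent hα
    have hH := ENNReal.lintegral_mul_le_Lp_mul_Lq
      (volume.restrict (Metric.closedBall x r)) hpq hg.aemeasurable
      (aemeasurable_const (b := (1:ℝ≥0∞)))
    simp only [Pi.mul_apply, mul_one, ENNReal.one_rpow] at hH
    rw [setLIntegral_const, one_mul] at hH
    rw [Measure.addHaar_closedBall_center volume x r, ← hVdef] at hH
    have hGle : G x ≤ (∫⁻ y in Metric.closedBall x r, g y ^ α) ^ (1/α) * V ^ (1/q) := hH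
    have hstep : G x ^ α ≤ ((∫⁻ y in Metric.closedBall x r, g y ^ α) ^ (1/α) * V ^ (1/q)) ^ α :=
      ENNReal.rpow_le_rpow hGle hα0.le
    refine hstep.trans (le_of_eq ?_)
    rw [ENNReal.mul_rpow_of_nonneg _ _ hα0.le, ← ENNReal.rpow_mul, ← ENNReal.rpow_mul]
    have e1 : 1/α * α = 1 := by field_simp
    have e2 : 1/q * α = α - 1 := by
      have h2 := hpq.inv_add_inv_eq_inv
      have hq0 : q ≠ 0 := hpq.symm.ne_zero
      field_simp at h2 ⊢
      nlinarith [h2]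
    rw [e1, e2, ENNReal.rpow_one, mul_comm]
  have hA : ∫⁻ x, G x ^ α ≤ (c ^ α * Iα) * ENNReal.ofReal (r ^ (α * d)) := by
    calc ∫⁻ x, G x ^ α
        ≤ ∫⁻ x, V ^ (α - 1) * ∫⁻ y in Metric.closedBall x r, g y ^ α := lintegral_mono hApt
      _ = V ^ (α - 1) * ∫⁻ x, ∫⁻ y in Metric.closedBall x r, g y ^ α :=
          lintegral_const_mul' _ _ (ENNReal.rpow_ne_top_of_nonneg (by linarith) hVt)
      _ = V ^ (α - 1) * (V * Iα) := by rw [hfub2]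
      _ = (V ^ (α - 1) * V) * Iα := by ring
      _ = V ^ α * Iα := by
          have h5 : V ^ (α - 1) * V = V ^ α := by
            nth_rewrite 2 [← ENNReal.rpow_one V]
            rw [← ENNReal.rpow_add_of_nonneg _ _ (by linarith) zero_le_one]
            norm_num
          rw [h5]
      _ = (c ^ α * Iα) * ENNReal.ofReal (r ^ (α * d)) := by
          rw [hVeq, ENNReal.mul_rpow_of_nonneg _ _ hα0.le,
            ENNReal.ofReal_rpow_of_nonneg (Real.rpow_nonneg hr.le _) hα0.le,
            ← Real.rpow_mul hr.le]
          rw [mul_comm (d:ℝ) α]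
          ring
  -- finiteness of constants
  have hct : c ≠ ⊤ := measure_ball_lt_top.ne
  have hKB : I1 ^ α * c ≠ ⊤ :=
    ENNReal.mul_ne_top (ENNReal.rpow_ne_top_of_nonneg hα0.le hI1) hct
  have hKA : c ^ α * Iα ≠ ⊤ :=
    ENNReal.mul_ne_top (ENNReal.rpow_ne_top_of_nonneg hα0.le hct) hIα
  have hCB : I1 ^ α * c ≤ ENNReal.ofReal C := by
    rw [ENNReal.le_ofReal_iff_toReal_le hKB hC.le, hCdef]
    have := ENNReal.toReal_nonneg (a := c ^ α * Iα)
    linarith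
  have hCA : c ^ α * Iα ≤ ENNReal.ofReal C := by
    rw [ENNReal.le_ofReal_iff_toReal_le hKA hC.le, hCdef]
    have := ENNReal.toReal_nonneg (a := I1 ^ α * c)
    linarith
  have hbound : ∫⁻ x, ENNReal.ofReal (|∫ y in Metric.closedBall x r, φ y| ^ α)
      ≤ ENNReal.ofReal (C * min (r ^ (d:ℝ)) (r ^ (α * d))) := by
    rcases min_cases (r ^ (d:ℝ)) (r ^ (α * d)) with ⟨hmin, _⟩ | ⟨hmin, _⟩ <;> rw [hmin]
    · refine (hL.trans hB).trans ?_
      rw [ENNReal.ofReal_mul hC.le]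
      exact mul_le_mul_left hCB _
    · refine (hL.trans hA).trans ?_
      rw [ENNReal.ofReal_mul hC.le]
      exact mul_le_mul_left hCA _
  have hmin_nonneg : 0 ≤ C * min (r ^ (d:ℝ)) (r ^ (α * d)) := by
    refine mul_nonneg hC.le (le_min (Real.rpow_nonneg hr.le _) (Real.rpow_nonneg hr.le _))
  by_cases hm : AEStronglyMeasurable
      (fun x => |∫ y in Metric.closedBall x r, φ y| ^ α) volume
  · rw [integral_eq_lintegral_of_nonneg_ae
      (Filter.Eventually.of_forall fun x => Real.rpow_nonneg (abs_nonneg _) α) hm]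
    have hfin := ENNReal.toReal_mono ENNReal.ofReal_ne_top hbound
    rwa [ENNReal.toReal_ofReal hmin_nonneg] at hfin
  · rw [integral_non_aestronglyMeasurable hm]
    exact hmin_nonneg
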